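/- (Theorem: semi-invariants of filtered E_r-Dynkin quivers.) Let n ≥ 1 and r ∈ {6,7,8}, and let Q be an arbitrary orientation of the E_r-Dynkin graph: vertices 1,…,r and arrows a_1,…,a_{r−1}, where for α ≠ 4 the endpoint set of a_α is {α, α+1}, and the endpoint set of a_4 is {3, 5}. Let U_n^r act on 𝔟_n^{⊕(r−1)} by (u_1,…,u_r)·(A_1,…,A_{r−1}) = (u_{h(a_α)} A_α u_{t(a_α)}^{−1})_{α}. Then a polynomial function f on 𝔟_n^{⊕(r−1)} is invariant under this action if and only if there is a polynomial g in (r−1)·n variables such that f(A_1,…,A_{r−1}) = g(((A_α)_{ii})_{1≤α≤r−1, 1≤i≤n}) for all tuples of upper triangular matrices; that is, ℂ[F•Rep(Q,β)]^{𝕌_β} = ℂ[𝔱_n^{⊕(r−1)}] for β = (n,…,n). -/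
import Mathlib


/-- `M` is an upper triangular complex matrix (an element of `𝔟ₙ`). -/
def IsUT {n : ℕ} (M : Matrix (Fin n) (Fin n) ℂ) : Prop :=
  ∀ i j : Fin n, j < i → M i j = 0

/-- `M` is a unipotent upper triangular complex matrix (an element of `Uₙ`). -/
def IsUnipUT {n : ℕ} (M : Matrix (Fin n) (Fin n) ℂ) : Prop :=
  IsUT M ∧ ∀ i : Fin n, M i i = 1

namespace ErAux

variable {n : ℕ}

lemma isUT_mul {M N : Matrix (Fin n) (Fin n) ℂ} (hM : IsUT M) (hN : IsUT N) :
    IsUT (M * N) := by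
  intro i j hij
  rw [Matrix.mul_apply]
  apply Finset.sum_eq_zero
  intro k _
  rcases lt_or_ge k i with h | h
  · rw [hM i k h, zero_mul]
  · rw [hN k j (lt_of_lt_of_le hij h), mul_zero]

lemma mul_diag {M N : Matrix (Fin n) (Fin n) ℂ} (hM : IsUT M) (hN : IsUT N) (i : Fin n) :
    (M * N) i i = M i i * N i i := by
  rw [Matrix.mul_apply]
  apply Finset.sum_eq_single i
  · intro k _ hk
    rcases lt_or_ge k i with h | h
    · rw [hM i k h, zero_mul]
    · rw [hN k i (lt_of_le_of_ne h (Ne.symm hk)), mul_zero]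
  · intro h; exact absurd (Finset.mem_univ i) h

lemma isUT_bt {M : Matrix (Fin n) (Fin n) ℂ} (hM : IsUT M) : M.BlockTriangular id := by
  intro i j h; exact hM i j h

lemma isUT_det {M : Matrix (Fin n) (Fin n) ℂ} (hM : IsUT M) : M.det = ∏ i, M i i :=
  Matrix.det_of_upperTriangular (isUT_bt hM)

lemma isUnit_det_of_UT {M : Matrix (Fin n) (Fin n) ℂ} (hM : IsUT M)
    (h : ∀ i, M i i ≠ 0) : IsUnit M.det := by
  rw [isUT_det hM]
  exact isUnit_iff_ne_zero.mpr (Finset.prod_ne_zero_iff.mpr fun i _ => h i)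

lemma isUT_inv {M : Matrix (Fin n) (Fin n) ℂ} (hM : IsUT M)
    (h : ∀ i, M i i ≠ 0) : IsUT M⁻¹ := by
  have : Invertible M := M.invertibleOfIsUnitDet (isUnit_det_of_UT hM h)
  intro i j hij
  exact Matrix.blockTriangular_inv_of_blockTriangular (isUT_bt hM) hij

lemma inv_diag {M : Matrix (Fin n) (Fin n) ℂ} (hM : IsUT M)
    (h : ∀ i, M i i ≠ 0) (i : Fin n) : M⁻¹ i i = (M i i)⁻¹ := by
  have h1 : M⁻¹ * M = 1 := Matrix.nonsing_inv_mul M (isUnit_det_of_UT hM h)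
  have h2 := mul_diag (isUT_inv hM h) hM i
  rw [h1, Matrix.one_apply_eq] at h2
  exact eq_inv_of_mul_eq_one_left h2.symm

lemma unip_one : IsUnipUT (1 : Matrix (Fin n) (Fin n) ℂ) :=
  ⟨fun _ _ hij => Matrix.one_apply_ne hij.ne', fun i => Matrix.one_apply_eq i⟩

lemma unip_ne {u : Matrix (Fin n) (Fin n) ℂ} (hu : IsUnipUT u) (i : Fin n) : u i i ≠ 0 := by
  rw [hu.2 i]; exact one_ne_zero

lemma unip_isUnit_det {u : Matrix (Fin n) (Fin n) ℂ} (hu : IsUnipUT u) : IsUnit u.det :=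
  isUnit_det_of_UT hu.1 (unip_ne hu)

lemma unip_inv {u : Matrix (Fin n) (Fin n) ℂ} (hu : IsUnipUT u) : IsUnipUT u⁻¹ := by
  refine ⟨isUT_inv hu.1 (unip_ne hu), fun i => ?_⟩
  rw [inv_diag hu.1 (unip_ne hu) i, hu.2 i, inv_one]

/-- The change of basis bringing a generic filtered representation to its diagonal part,
built vertex by vertex along the tree underlying the `E_r` graph. -/
noncomputable def bld {r : ℕ} (hd : Fin (r - 1) → Fin r)
    (A : Fin (r - 1) → Matrix (Fin n) (Fin n) ℂ) : ℕ → Matrix (Fin n) (Fin n) ℂ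
  | 0 => 1
  | v + 1 =>
    if h : v < r - 1 then
      let α : Fin (r - 1) := ⟨v, h⟩
      let prev := bld hd A (if v = 3 then 2 else v)
      let D := Matrix.diagonal (fun i => A α i i)
      if (hd α : ℕ) = v + 1 then D * prev * (A α)⁻¹ else D⁻¹ * prev * A α
    else 1
  termination_by v => v
  decreasing_by split <;> omega

lemma diag_UT (d : Fin n → ℂ) : IsUT (Matrix.diagonal d) := by
  intro i j hij
  exact Matrix.diagonal_apply_ne d hij.ne'

lemma bld_unip {r : ℕ} (hd : Fin (r - 1) → Fin r)
    (A : Fin (r - 1) → Matrix (Fin n) (Fin n) ℂ)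
    (hUT : ∀ α, IsUT (A α)) (hne : ∀ α i, A α i i ≠ 0) :
    ∀ v, IsUnipUT (bld hd A v) := by
  intro v
  induction v using Nat.strong_induction_on with
  | _ v ih =>
    match v with
    | 0 => rw [bld]; exact unip_one
    | v + 1 =>
      rw [bld]
      by_cases h : v < r - 1
      · rw [dif_pos h]
        dsimp only
        set α : Fin (r - 1) := ⟨v, h⟩
        have hprev : IsUnipUT (bld hd A (if v = 3 then 2 else v)) := by
          apply ih; split <;> omega
        have hDut : IsUT (Matrix.diagonal (fun i => A α i i)) := diag_UT _
        have hDne : ∀ i, Matrix.diagonal (fun i => A α i i) i i ≠ 0 := by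
          intro i; rw [Matrix.diagonal_apply_eq]; exact hne α i
        split
        · refine ⟨isUT_mul (isUT_mul hDut hprev.1) (isUT_inv (hUT α) (hne α)), fun i => ?_⟩
          rw [mul_diag (isUT_mul hDut hprev.1) (isUT_inv (hUT α) (hne α)),
            mul_diag hDut hprev.1, Matrix.diagonal_apply_eq, hprev.2 i,
            inv_diag (hUT α) (hne α), mul_one, mul_inv_cancel₀ (hne α i)]
        · refine ⟨isUT_mul (isUT_mul (isUT_inv hDut hDne) hprev.1) (hUT α), fun i => ?_⟩
          rw [mul_diag (isUT_mul (isUT_inv hDut hDne) hprev.1) (hUT α),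
            mul_diag (isUT_inv hDut hDne) hprev.1, inv_diag hDut hDne,
            Matrix.diagonal_apply_eq, hprev.2 i, mul_one, inv_mul_cancel₀ (hne α i)]
      · rw [dif_neg h]; exact unip_one

/-- Any tuple of upper triangular matrices with invertible diagonal parts lies in the
`𝕌`-orbit of its diagonal part. -/
lemma key {r : ℕ} (tl hd : Fin (r - 1) → Fin r)
    (hor : ∀ α : Fin (r - 1),
      ((α : ℕ) ≠ 3 →
        (((tl α : ℕ) = (α : ℕ) ∧ (hd α : ℕ) = (α : ℕ) + 1) ∨
         ((tl α : ℕ) = (α : ℕ) + 1 ∧ (hd α : ℕ) = (α : ℕ)))) ∧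
      ((α : ℕ) = 3 →
        (((tl α : ℕ) = 2 ∧ (hd α : ℕ) = 4) ∨
         ((tl α : ℕ) = 4 ∧ (hd α : ℕ) = 2))))
    (A : Fin (r - 1) → Matrix (Fin n) (Fin n) ℂ)
    (hUT : ∀ α, IsUT (A α)) (hne : ∀ α i, A α i i ≠ 0) :
    ∃ u : Fin r → Matrix (Fin n) (Fin n) ℂ, (∀ v, IsUnipUT (u v)) ∧
      ∀ α, u (hd α) * A α * (u (tl α))⁻¹ = Matrix.diagonal (fun i => A α i i) := by
  refine ⟨fun v => bld hd A (v : ℕ), fun v => bld_unip hd A hUT hne _, ?_⟩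
  intro α
  beta_reduce
  have hα : (α : ℕ) < r - 1 := α.isLt
  set p : ℕ := if (α : ℕ) = 3 then 2 else (α : ℕ) with hp
  have hcp : (((tl α : ℕ) = p ∧ (hd α : ℕ) = (α : ℕ) + 1) ∨
      ((tl α : ℕ) = (α : ℕ) + 1 ∧ (hd α : ℕ) = p)) := by
    rcases hor α with ⟨h1, h2⟩
    by_cases h3 : (α : ℕ) = 3
    · rcases h2 h3 with h | h
      · left; rw [hp, if_pos h3, h3]; exact ⟨h.1, by omega⟩
      · right; rw [hp, if_pos h3, h3]; exact ⟨by omega, h.2⟩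
    · rcases h1 h3 with h | h
      · left; rw [hp, if_neg h3]; exact h
      · right; rw [hp, if_neg h3]; exact h
  have hpc : p ≠ (α : ℕ) + 1 := by rw [hp]; split <;> omega
  set D := Matrix.diagonal (fun i => A α i i) with hD
  have hDut : IsUT D := diag_UT _
  have hDne : ∀ i, D i i ≠ 0 := by
    intro i; rw [hD, Matrix.diagonal_apply_eq]; exact hne α i
  have hAdet : IsUnit (A α).det := isUnit_det_of_UT (hUT α) (hne α)
  have hBu : IsUnipUT (bld hd A p) := bld_unip hd A hUT hne p
  have hBdet : IsUnit (bld hd A p).det := unip_isUnit_det hBu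
  set B := bld hd A p with hB
  have hc : bld hd A ((α : ℕ) + 1) =
      if (hd α : ℕ) = (α : ℕ) + 1 then D * B * (A α)⁻¹ else D⁻¹ * B * A α := by
    rw [bld, dif_pos hα]
  rcases hcp with ⟨ht, hh⟩ | ⟨ht, hh⟩
  · rw [if_pos hh] at hc
    rw [show bld hd A ((hd α : Fin r) : ℕ) = D * B * (A α)⁻¹ by rw [hh, hc]]
    rw [show bld hd A ((tl α : Fin r) : ℕ) = B by rw [ht]]
    rw [mul_assoc (D * B), Matrix.nonsing_inv_mul _ hAdet, mul_one,
      mul_assoc, Matrix.mul_nonsing_inv _ hBdet, mul_one]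
  · rw [if_neg (hh ▸ hpc)] at hc
    rw [show bld hd A ((hd α : Fin r) : ℕ) = B by rw [hh]]
    rw [show bld hd A ((tl α : Fin r) : ℕ) = D⁻¹ * B * A α by rw [ht, hc]]
    have hDdet : IsUnit D.det := isUnit_det_of_UT hDut hDne
    rw [Matrix.mul_inv_rev, Matrix.mul_inv_rev, Matrix.nonsing_inv_nonsing_inv _ hDdet,
      mul_assoc B, ← mul_assoc (A α), Matrix.mul_nonsing_inv _ hAdet, one_mul,
      ← mul_assoc, Matrix.mul_nonsing_inv _ hBdet, one_mul]

lemma eval_bind₁ {σ τ : Type*} (x : τ → ℂ) (g : σ → MvPolynomial τ ℂ)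
    (φ : MvPolynomial σ ℂ) :
    MvPolynomial.eval x (MvPolynomial.bind₁ g φ) =
      MvPolynomial.eval (fun i => MvPolynomial.eval x (g i)) φ :=
  MvPolynomial.eval₂Hom_bind₁ _ _ _ _

end ErAux

open ErAux MvPolynomial

/-- Semi-invariants of filtered `E_r`-Dynkin quivers (`r ∈ {6,7,8}`):
for any orientation of the `E_r`-Dynkin graph (vertices `Fin r` in 0-indexed form,
arrows `Fin (r-1)`; for `α ≠ 3` the `α`-th arrow joins `α` and `α+1`, and the arrow of
index `3` (the branch arrow, `a_4` in 1-indexed form) joins `2` and `4`), a polynomial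
function on `𝔟ₙ^{⊕(r-1)}` is invariant under the change-of-basis action of `Uₙ^r` iff
it is a polynomial in the diagonal entries; i.e.
`ℂ[F•Rep(Q,β)]^{𝕌_β} = ℂ[𝔱ₙ^{⊕(r-1)}]`. -/
theorem semiInvariants_filtered_Er_Dynkin_quiver
    (n r : ℕ) (hn : 1 ≤ n) (hr : r = 6 ∨ r = 7 ∨ r = 8)
    (tl hd : Fin (r - 1) → Fin r)
    (hor : ∀ α : Fin (r - 1),
      ((α : ℕ) ≠ 3 →
        (((tl α : ℕ) = (α : ℕ) ∧ (hd α : ℕ) = (α : ℕ) + 1) ∨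
         ((tl α : ℕ) = (α : ℕ) + 1 ∧ (hd α : ℕ) = (α : ℕ)))) ∧
      ((α : ℕ) = 3 →
        (((tl α : ℕ) = 2 ∧ (hd α : ℕ) = 4) ∨
         ((tl α : ℕ) = 4 ∧ (hd α : ℕ) = 2))))
    (f : (Fin (r - 1) → Matrix (Fin n) (Fin n) ℂ) → ℂ)
    (hf : ∃ P : MvPolynomial (Fin (r - 1) × Fin n × Fin n) ℂ,
      ∀ A, f A = MvPolynomial.eval (fun q => A q.1 q.2.1 q.2.2) P) :
    (∀ u : Fin r → Matrix (Fin n) (Fin n) ℂ, (∀ v, IsUnipUT (u v)) →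
        ∀ A : Fin (r - 1) → Matrix (Fin n) (Fin n) ℂ, (∀ α, IsUT (A α)) →
          f (fun α => u (hd α) * A α * (u (tl α))⁻¹) = f A) ↔
      ∃ g : MvPolynomial (Fin (r - 1) × Fin n) ℂ,
        ∀ A : Fin (r - 1) → Matrix (Fin n) (Fin n) ℂ, (∀ α, IsUT (A α)) →
          f A = MvPolynomial.eval (fun q => A q.1 q.2 q.2) g := by
  classical
  obtain ⟨P, hP⟩ := hf
  constructor
  · -- invariance implies `f` is a polynomial in the diagonal entries
    intro h
    -- substitutions: kill the strictly lower entries / keep only the diagonal entries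
    set σ0 : Fin (r - 1) × Fin n × Fin n → MvPolynomial (Fin (r - 1) × Fin n × Fin n) ℂ :=
      fun q => if q.2.2 < q.2.1 then 0 else X q with hσ0
    set σd : Fin (r - 1) × Fin n × Fin n → MvPolynomial (Fin (r - 1) × Fin n × Fin n) ℂ :=
      fun q => if q.2.1 = q.2.2 then X q else 0 with hσd
    set Q0 : MvPolynomial (Fin (r - 1) × Fin n × Fin n) ℂ :=
      bind₁ σ0 (P - bind₁ σd P) with hQ0
    -- evaluation of `Q0` computes `f A - f (diagonal part of A)`
    have hQ0eval : ∀ x : Fin (r - 1) × Fin n × Fin n → ℂ,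
        eval x Q0 =
          f (fun α => Matrix.of fun i j => if j < i then 0 else x (α, i, j)) -
            f (fun α => Matrix.diagonal fun i => x (α, i, i)) := by
      intro x
      rw [hQ0, ErAux.eval_bind₁, map_sub, ErAux.eval_bind₁, hP, hP]
      have e0 : (fun i => eval x (σ0 i)) =
          fun q : Fin (r - 1) × Fin n × Fin n =>
            (Matrix.of fun i j => if j < i then (0 : ℂ) else x (q.1, i, j)) q.2.1 q.2.2 := by
        funext q
        by_cases hq : q.2.2 < q.2.1 <;> simp [hσ0, hq, Matrix.of_apply]
      rw [e0]
      congr 1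
      refine congrArg (fun z => eval z P) (funext fun q => ?_)
      rcases q with ⟨α, i, j⟩
      by_cases hq : i = j
      · subst hq
        simp [hσd, Matrix.of_apply]
      · simp [hσd, hq, Matrix.diagonal_apply_ne _ hq]
    -- `Q0` vanishes at every point with nonvanishing diagonal coordinates
    have main : ∀ x : Fin (r - 1) × Fin n × Fin n → ℂ,
        (∀ α i, x (α, i, i) ≠ 0) → eval x Q0 = 0 := by
      intro x hx
      rw [hQ0eval]
      set A : Fin (r - 1) → Matrix (Fin n) (Fin n) ℂ :=
        fun α => Matrix.of fun i j => if j < i then (0 : ℂ) else x (α, i, j) with hA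
      have hAUT : ∀ α, IsUT (A α) := by
        intro α i j hij
        simp [hA, Matrix.of_apply, hij]
      have hne : ∀ α i, A α i i ≠ 0 := by
        intro α i
        simpa [hA, Matrix.of_apply] using hx α i
      obtain ⟨u, hu, hk⟩ := ErAux.key tl hd hor A hAUT hne
      have h1 := h u hu A hAUT
      rw [funext hk] at h1
      have e2 : (fun α => Matrix.diagonal fun i => A α i i) =
          fun α => Matrix.diagonal fun i => x (α, i, i) := by
        funext α
        congr 1
        funext i
        simp [hA, Matrix.of_apply]
      rw [e2] at h1
      rw [h1, sub_self]
    -- hence the polynomial identity `Q0 = 0`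
    have hprodne : (∏ s : Fin (r - 1) × Fin n, (X (s.1, s.2, s.2) :
        MvPolynomial (Fin (r - 1) × Fin n × Fin n) ℂ)) ≠ 0 :=
      Finset.prod_ne_zero_iff.mpr fun s _ => MvPolynomial.X_ne_zero _
    have hQ0z : Q0 = 0 := by
      have hR : (∏ s : Fin (r - 1) × Fin n, (X (s.1, s.2, s.2) :
          MvPolynomial (Fin (r - 1) × Fin n × Fin n) ℂ)) * Q0 = 0 := by
        apply MvPolynomial.funext
        intro x
        rw [map_zero, map_mul]
        by_cases hx : ∀ α i, x (α, i, i) ≠ 0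
        · rw [main x hx, mul_zero]
        · push_neg at hx
          obtain ⟨α, i, hai⟩ := hx
          rw [map_prod]
          rw [Finset.prod_eq_zero (Finset.mem_univ (α, i)) (by rw [MvPolynomial.eval_X]; exact hai)]
          rw [zero_mul]
      rcases mul_eq_zero.mp hR with h' | h'
      · exact absurd h' hprodne
      · exact h'
    -- the polynomial in the diagonal variables
    refine ⟨bind₁ (fun q => if q.2.1 = q.2.2 then X (q.1, q.2.1) else 0) P, ?_⟩
    intro A hA
    have hx0 : eval (fun q : Fin (r - 1) × Fin n × Fin n => A q.1 q.2.1 q.2.2) Q0 = 0 := by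
      rw [hQ0z, map_zero]
    rw [hQ0eval] at hx0
    have eA : (fun α => Matrix.of fun i j =>
        if j < i then (0 : ℂ) else A α i j) = A := by
      funext α
      ext i j
      by_cases hij : j < i
      · simp [Matrix.of_apply, hij, hA α i j hij]
      · simp [Matrix.of_apply, hij]
    rw [eA] at hx0
    have hfd : f A = f (fun α => Matrix.diagonal fun i => A α i i) := by
      have := sub_eq_zero.mp hx0
      exact this
    rw [hfd, hP, ErAux.eval_bind₁]
    refine congrArg (fun z => eval z P) (funext fun q => ?_)
    rcases q with ⟨α, i, j⟩
    by_cases hq : i = j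
    · subst hq
      simp
    · simp [hq, Matrix.diagonal_apply_ne _ hq]
  · -- a polynomial in the diagonal entries is invariant
    rintro ⟨g, hg⟩ u hu A hA
    have hBU : ∀ α, IsUT (u (hd α) * A α * (u (tl α))⁻¹) := fun α =>
      isUT_mul (isUT_mul (hu (hd α)).1 (hA α)) (unip_inv (hu (tl α))).1
    rw [hg _ hBU, hg A hA]
    refine congrArg (fun z => eval z g) (funext fun q => ?_)
    rcases q with ⟨α, i⟩
    have h1 : (u (hd α) * A α * (u (tl α))⁻¹) i i =
        (u (hd α) * A α) i i * (u (tl α))⁻¹ i i :=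
      mul_diag (isUT_mul (hu (hd α)).1 (hA α)) (unip_inv (hu (tl α))).1 i
    rw [h1, mul_diag (hu (hd α)).1 (hA α) i, (hu (hd α)).2 i, (unip_inv (hu (tl α))).2 i,
      one_mul, mul_one]
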